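/- Let 0 < x < 1, n ≥ 1, S = ∑_{i≥1} Zᵢ and S_n = ∑_{i=1}^n Zᵢ where Zᵢ are independent geometric random variables with P(Zᵢ ≥ k) = x^{ik}. Then the total variation distance between the distributions of S and S_n satisfies d_TV(S, S_n) ≤ 1 − ∏_{i=n+1}^∞ (1−xⁱ) ≤ x^{n+1}/(1−x). -/

import Mathlib

open MeasureTheory ProbabilityTheory Filter Topology

theorem dTV_S_Sn_upper {Ω : Type*} [MeasurableSpace Ω] (P : Measure Ω)
    [IsProbabilityMeasure P] (x : ℝ) (hx0 : 0 < x) (hx1 : x < 1)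
    (Z : ℕ → Ω → ℕ) (hmeas : ∀ i, Measurable (Z i))
    (hindep : iIndepFun Z P)
    (hgeom : ∀ i, 1 ≤ i → ∀ k : ℕ, P {ω | k ≤ Z i ω} = ENNReal.ofReal (x ^ (i * k)))
    (S : Ω → ℕ) (hSmeas : Measurable S)
    (hS : ∀ᵐ ω ∂P, ∀ᶠ N in atTop, S ω = ∑ i ∈ Finset.Icc 1 N, Z i ω)
    (n : ℕ) (hn : 1 ≤ n) :
    (⨆ B : Set ℕ, |(P {ω | S ω ∈ B}).toReal
        - (P {ω | (∑ i ∈ Finset.Icc 1 n, Z i ω) ∈ B}).toReal|)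
      ≤ 1 - ∏' i : ℕ, (1 - x ^ (n + 1 + i))
    ∧ 1 - ∏' i : ℕ, (1 - x ^ (n + 1 + i)) ≤ x ^ (n + 1) / (1 - x) := by
  -- basic facts about powers of x
  have hxpow0 : ∀ i : ℕ, 0 ≤ x ^ i := fun i => pow_nonneg hx0.le i
  have hxpow1 : ∀ i : ℕ, x ^ i ≤ 1 := fun i => pow_le_one₀ hx0.le hx1.le
  -- the partial products
  set f : ℕ → ℝ := fun i => 1 - x ^ (n + 1 + i) with hf_def
  set p : Finset ℕ → ℝ := fun s => ∏ i ∈ s, f i with hp_def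
  have hf0 : ∀ i, 0 ≤ f i := fun i => by
    simp only [hf_def, sub_nonneg]; exact hxpow1 _
  have hf1 : ∀ i, f i ≤ 1 := fun i => by
    simp only [hf_def]; nlinarith [hxpow0 (n + 1 + i)]
  have hp0 : ∀ s, 0 ≤ p s := fun s => Finset.prod_nonneg fun i _ => hf0 i
  have hp1 : ∀ s, p s ≤ 1 := fun s =>
    Finset.prod_le_one (fun i _ => hf0 i) (fun i _ => hf1 i)
  have hanti : Antitone p := by
    intro s t hst
    have := Finset.prod_sdiff (f := f) hst
    calc p t = p (t \ s) * p s := (Finset.prod_sdiff hst).symm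
    _ ≤ 1 * p s := mul_le_mul_of_nonneg_right (hp1 _) (hp0 _)
    _ = p s := one_mul _
  have hbdd : BddBelow (Set.range p) := ⟨0, by rintro y ⟨s, rfl⟩; exact hp0 s⟩
  set T : ℝ := ⨅ s : Finset ℕ, p s with hT_def
  have hHasProd : HasProd f T := tendsto_atTop_ciInf hanti hbdd
  have htprod : ∏' i : ℕ, (1 - x ^ (n + 1 + i)) = T := hHasProd.tprod_eq
  have hT_le : ∀ s, T ≤ p s := fun s => ciInf_le hbdd s
  have hT0 : 0 ≤ T := le_ciInf hp0
  have hT1 : T ≤ 1 := (hT_le ∅).trans_eq (by simp [hp_def])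
  -- Weierstrass inequality
  have hW : ∀ s : Finset ℕ, 1 - ∑ i ∈ s, x ^ (n + 1 + i) ≤ p s := by
    intro s
    induction s using Finset.induction_on with
    | empty => simp [hp_def]
    | @insert a s ha ih =>
      rw [Finset.sum_insert ha]
      have hps : p (insert a s) = f a * p s := Finset.prod_insert ha
      rw [hps]
      have h1 : f a * (1 - ∑ i ∈ s, x ^ (n + 1 + i)) ≤ f a * p s :=
        mul_le_mul_of_nonneg_left ih (hf0 a)
      have hsum0 : 0 ≤ ∑ i ∈ s, x ^ (n + 1 + i) :=
        Finset.sum_nonneg fun i _ => hxpow0 _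
      have := hxpow0 (n + 1 + a)
      have := hxpow1 (n + 1 + a)
      simp only [hf_def] at h1 ⊢
      nlinarith
  -- geometric sum
  have hsum : Summable fun i : ℕ => x ^ (n + 1 + i) := by
    simpa [pow_add] using (summable_geometric_of_lt_one hx0.le hx1).mul_left (x ^ (n + 1))
  have htsum : ∑' i : ℕ, x ^ (n + 1 + i) = x ^ (n + 1) / (1 - x) := by
    simp only [pow_add]
    rw [tsum_mul_left, tsum_geometric_of_lt_one hx0.le hx1, div_eq_mul_inv]
  -- second part
  have part2 : 1 - T ≤ x ^ (n + 1) / (1 - x) := by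
    rw [← htsum]
    have : 1 - ∑' i : ℕ, x ^ (n + 1 + i) ≤ T :=
      le_ciInf fun s => by
        have h1 := hW s
        have h2 : ∑ i ∈ s, x ^ (n + 1 + i) ≤ ∑' i : ℕ, x ^ (n + 1 + i) :=
          Summable.sum_le_tsum s (fun i _ => hxpow0 _) hsum
        linarith
    linarith
  -- measure side
  set E : ℕ → Set Ω := fun i => {ω | Z i ω = 0} with hE_def
  have hE_meas : ∀ i, MeasurableSet (E i) := fun i =>
    (hmeas i) (measurableSet_singleton 0)
  have hPE : ∀ i, 1 ≤ i → P (E i) = ENNReal.ofReal (1 - x ^ i) := by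
    intro i hi
    have hcompl : E i = {ω | 1 ≤ Z i ω}ᶜ := by
      ext ω; simp [hE_def, Nat.lt_iff_add_one_le, Nat.le_zero]
    have hms : MeasurableSet {ω | 1 ≤ Z i ω} := by
      have : {ω | 1 ≤ Z i ω} = Z i ⁻¹' (Set.Ici 1) := rfl
      rw [this]; exact (hmeas i) measurableSet_Ici
    rw [hcompl, measure_compl hms (measure_ne_top P _), hgeom i hi 1,
      measure_univ, mul_one]
    rw [ENNReal.ofReal_sub _ (hxpow0 i), ENNReal.ofReal_one]
  -- the decreasing sets
  set B : ℕ → Set Ω := fun m => ⋂ i ∈ Finset.Icc (n + 1) (n + 1 + m), E i with hB_def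
  have hB_meas : ∀ m, MeasurableSet (B m) :=
    fun m => MeasurableSet.biInter (Finset.Icc _ _).countable_toSet fun i _ => hE_meas i
  have hB_anti : Antitone B := by
    intro m m' hmm ω hω
    simp only [hB_def, Set.mem_iInter, Finset.mem_Icc] at hω ⊢
    intro i hi
    exact hω i ⟨hi.1, by omega⟩
  have hPB : ∀ m, P (B m) = ENNReal.ofReal (p (Finset.range (m + 1))) := by
    intro m
    have hmeasint : P (B m) = ∏ i ∈ Finset.Icc (n + 1) (n + 1 + m), P (E i) := by
      refine hindep.meas_biInter ?_
      intro i _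
      exact ⟨{0}, measurableSet_singleton 0, rfl⟩
    have hicc : Finset.Icc (n + 1) (n + 1 + m)
        = Finset.map ⟨fun i => n + 1 + i, add_right_injective (n + 1)⟩ (Finset.range (m + 1)) := by
      ext j
      simp only [Finset.mem_Icc, Finset.mem_map, Finset.mem_range,
        Function.Embedding.coeFn_mk]
      constructor
      · rintro ⟨h1, h2⟩; exact ⟨j - (n + 1), by omega, by omega⟩
      · rintro ⟨i, hi, rfl⟩; omega
    rw [hmeasint, hicc, Finset.prod_map]
    simp only [Function.Embedding.coeFn_mk]
    rw [show (p (Finset.range (m + 1)) : ℝ) = ∏ i ∈ Finset.range (m + 1), f i from rfl,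
      ENNReal.ofReal_prod_of_nonneg fun i _ => hf0 i]
    exact Finset.prod_congr rfl fun i _ => hPE _ (by omega)
  have htend : Tendsto (fun m => P (B m)) atTop (𝓝 (P (⋂ m, B m))) :=
    tendsto_measure_iInter_atTop (fun m => (hB_meas m).nullMeasurableSet) hB_anti
      ⟨0, measure_ne_top P _⟩
  have hT_le_PA : ENNReal.ofReal T ≤ P (⋂ m, B m) := by
    refine ge_of_tendsto' htend fun m => ?_
    rw [hPB m]
    exact ENNReal.ofReal_le_ofReal (hT_le _)
  -- the bad event
  set Nset : Set Ω := {ω | S ω ≠ ∑ i ∈ Finset.Icc 1 n, Z i ω} with hN_def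
  have hNsub : ∀ᵐ ω ∂P, ω ∈ Nset → ω ∈ (⋂ m, B m)ᶜ := by
    filter_upwards [hS] with ω hω
    intro hωN
    by_contra hc
    apply hωN
    rw [Set.notMem_compl_iff] at hc
    obtain ⟨N, hN1, hN2⟩ := (hω.and (eventually_ge_atTop n)).exists
    have hzero : ∀ i ∈ Finset.Icc 1 N, i ∉ Finset.Icc 1 n → Z i ω = 0 := by
      intro i hi hni
      simp only [Finset.mem_Icc] at hi hni
      have hi1 : n + 1 ≤ i := by omega
      have hmem := Set.mem_iInter.mp hc i
      simp only [hB_def, Set.mem_iInter, Finset.mem_Icc] at hmem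
      exact hmem i ⟨hi1, by omega⟩
    have hsubset : Finset.Icc 1 n ⊆ Finset.Icc 1 N := by
      intro i hi; simp only [Finset.mem_Icc] at *; omega
    rw [hN1]
    exact (Finset.sum_subset hsubset hzero).symm
  have hPN : P Nset ≤ P ((⋂ m, B m)ᶜ) := measure_mono_ae hNsub
  have hPAc : P ((⋂ m, B m)ᶜ) ≤ ENNReal.ofReal (1 - T) := by
    have hmA : MeasurableSet (⋂ m, B m) := MeasurableSet.iInter hB_meas
    rw [measure_compl hmA (measure_ne_top P _), measure_univ]
    calc 1 - P (⋂ m, B m) ≤ 1 - ENNReal.ofReal T := tsub_le_tsub_left hT_le_PA 1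
    _ = ENNReal.ofReal (1 - T) := by
        rw [ENNReal.ofReal_sub _ hT0, ENNReal.ofReal_one]
  have hPN_real : (P Nset).toReal ≤ 1 - T := by
    calc (P Nset).toReal ≤ (ENNReal.ofReal (1 - T)).toReal :=
      ENNReal.toReal_mono ENNReal.ofReal_ne_top (hPN.trans hPAc)
    _ = 1 - T := ENNReal.toReal_ofReal (by linarith)
  -- the TV bound
  have part1 : (⨆ Bs : Set ℕ, |(P {ω | S ω ∈ Bs}).toReal
      - (P {ω | (∑ i ∈ Finset.Icc 1 n, Z i ω) ∈ Bs}).toReal|) ≤ 1 - T := by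
    refine Real.iSup_le (fun Bs => ?_) (by linarith)
    set a := P {ω | S ω ∈ Bs}
    set b := P {ω | (∑ i ∈ Finset.Icc 1 n, Z i ω) ∈ Bs}
    have hab : a ≤ b + P Nset := by
      refine (measure_mono ?_).trans (measure_union_le _ _)
      intro ω hω
      by_cases h : ω ∈ Nset
      · exact Or.inr h
      · left
        simp only [hN_def, Set.mem_setOf_eq, not_not] at h
        simpa [← h] using hω
    have hba : b ≤ a + P Nset := by
      refine (measure_mono ?_).trans (measure_union_le _ _)
      intro ω hω
      by_cases h : ω ∈ Nset
      · exact Or.inr h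
      · left
        simp only [hN_def, Set.mem_setOf_eq, not_not] at h
        simpa [h] using hω
    have hfin : ∀ s : Set Ω, P s ≠ ⊤ := fun s => measure_ne_top P s
    have hab' : a.toReal ≤ b.toReal + (P Nset).toReal := by
      have := ENNReal.toReal_mono (ENNReal.add_ne_top.2 ⟨hfin _, hfin _⟩) hab
      rwa [ENNReal.toReal_add (hfin _) (hfin _)] at this
    have hba' : b.toReal ≤ a.toReal + (P Nset).toReal := by
      have := ENNReal.toReal_mono (ENNReal.add_ne_top.2 ⟨hfin _, hfin _⟩) hba
      rwa [ENNReal.toReal_add (hfin _) (hfin _)] at this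
    rw [abs_sub_le_iff]
    constructor <;> linarith
  rw [htprod]
  exact ⟨part1, part2⟩
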